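/- Let X be a real separable Hilbert space, k a bounded measurable kernel on X that is the Fourier transform of a finite Borel measure μ on X, i.e. k(x,y) = ∫_X exp(i⟨h, x−y⟩) dμ(h). Then for any Borel probability measures P, Q on X, MMD²_k(P,Q) = ∫_X |P̂(h) − Q̂(h)|² dμ(h), where P̂, Q̂ denote the Fourier transforms (characteristic functionals) of P and Q. -/

import Mathlib

set_option maxHeartbeats 1000000


open MeasureTheory
open scoped RealInnerProductSpace

/-- Squared Maximum Mean Discrepancy between `P` and `Q` with kernel `k`. -/
noncomputable def mmdSq {X : Type*} [MeasurableSpace X]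
    (k : X → X → ℝ) (P Q : Measure X) : ℝ :=
  (∫ x, ∫ y, k x y ∂P ∂P) + (∫ x, ∫ y, k x y ∂Q ∂Q) - 2 * ∫ x, ∫ y, k x y ∂P ∂Q

/-- The Fourier transform (characteristic functional) of a measure on a real Hilbert space. -/
noncomputable def charFun {X : Type*} [NormedAddCommGroup X] [InnerProductSpace ℝ X]
    [MeasurableSpace X] (P : Measure X) (h : X) : ℂ :=
  ∫ x, Complex.exp (Complex.I * ((⟪h, x⟫ : ℝ) : ℂ)) ∂P

section Aux

set_option linter.unusedSectionVars false

variable {X : Type*} [NormedAddCommGroup X] [InnerProductSpace ℝ X]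
    [TopologicalSpace.SeparableSpace X] [MeasurableSpace X] [BorelSpace X]

open Complex

noncomputable def eker {X : Type*} [NormedAddCommGroup X] [InnerProductSpace ℝ X]
    (h x : X) : ℂ := Complex.exp (Complex.I * ((⟪h, x⟫ : ℝ) : ℂ))

lemma eker_cont : Continuous fun p : X × X => eker p.1 p.2 :=
  Complex.continuous_exp.comp (continuous_const.mul
    (Complex.continuous_ofReal.comp continuous_inner))

lemma eker_norm (h x : X) : ‖eker h x‖ = 1 := by
  simp [eker, Complex.norm_exp]

lemma secondCountable_of_sep : SecondCountableTopology X :=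
  UniformSpace.secondCountable_of_separable X

lemma eker_sm : StronglyMeasurable fun p : X × X => eker p.1 p.2 := by
  haveI := secondCountable_of_sep (X := X)
  exact eker_cont.stronglyMeasurable

lemma eker_sm' : StronglyMeasurable fun p : X × X => eker p.2 p.1 := by
  haveI := secondCountable_of_sep (X := X)
  exact (eker_cont.comp continuous_swap).stronglyMeasurable

lemma charFun_eq (P : Measure X) (h : X) : _root_.charFun P h = ∫ x, eker h x ∂P := rfl

lemma charFun_sm (P : Measure X) [SFinite P] :
    StronglyMeasurable fun h : X => _root_.charFun P h :=
  eker_sm.integral_prod_right'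

lemma charFun_norm_le (P : Measure X) [IsProbabilityMeasure P] (h : X) :
    ‖_root_.charFun P h‖ ≤ 1 := by
  calc ‖_root_.charFun P h‖ ≤ ∫ x, ‖eker h x‖ ∂P := norm_integral_le_integral_norm _
    _ = 1 := by simp only [eker_norm]; simp

lemma eker_mul_conj (h x y : X) :
    eker h x * (starRingEnd ℂ) (eker h y) = Complex.exp (Complex.I * ((⟪h, x - y⟫ : ℝ) : ℂ)) := by
  unfold eker
  rw [← Complex.exp_conj, ← Complex.exp_add]
  congr 1
  rw [inner_sub_right]
  simp [map_mul, Complex.conj_ofReal]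
  ring

/-- Key computation: the double integral of the kernel equals an integral over `mu`. -/
lemma double_integral_eq
    (k : X → X → ℝ)
    (mu : Measure X) [IsFiniteMeasure mu]
    (hk : ∀ x y : X, (k x y : ℂ) = ∫ h, Complex.exp (Complex.I * ((⟪h, x - y⟫ : ℝ) : ℂ)) ∂mu)
    (P Q : Measure X) [IsProbabilityMeasure P] [IsProbabilityMeasure Q] :
    ∫ x, ∫ y, (k x y : ℂ) ∂Q ∂P
      = ∫ h, _root_.charFun P h * (starRingEnd ℂ) (_root_.charFun Q h) ∂mu := by
  haveI := secondCountable_of_sep (X := X)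
  have step1 : ∀ x : X, ∫ y, (k x y : ℂ) ∂Q
      = ∫ h, eker h x * (starRingEnd ℂ) (_root_.charFun Q h) ∂mu := by
    intro x
    have hpt : ∀ y, (k x y : ℂ) = ∫ h, eker h x * (starRingEnd ℂ) (eker h y) ∂mu := by
      intro y; rw [hk]; simp_rw [eker_mul_conj]
    simp_rw [hpt]
    rw [MeasureTheory.integral_integral_swap]
    · congr 1
      ext h
      rw [MeasureTheory.integral_const_mul, integral_conj, ← charFun_eq]
    · -- integrability on Q.prod mu
      refine (integrable_const (1 : ℝ)).mono' ?_ ?_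
      · refine (AEStronglyMeasurable.mul ?_ ?_)
        · haveI := secondCountable_of_sep (X := X)
          exact ((eker_cont.comp
            (continuous_snd.prodMk continuous_const)).stronglyMeasurable).aestronglyMeasurable
        · haveI := secondCountable_of_sep (X := X)
          exact (((Complex.continuous_conj.comp eker_cont).comp
            (continuous_snd.prodMk continuous_fst)).stronglyMeasurable).aestronglyMeasurable
      · refine Filter.Eventually.of_forall fun p => ?_
        simp only [Function.uncurry, norm_mul, eker_norm, RCLike.norm_conj, one_mul, mul_one,
          le_refl]
  simp_rw [step1]
  rw [MeasureTheory.integral_integral_swap]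
  · congr 1
    ext h
    rw [MeasureTheory.integral_mul_const, ← charFun_eq]
  · refine (integrable_const (1 : ℝ)).mono' ?_ ?_
    · exact (eker_sm'.mul
        ((Complex.continuous_conj.comp_stronglyMeasurable
          (charFun_sm Q)).comp_measurable measurable_snd)).aestronglyMeasurable
    · refine Filter.Eventually.of_forall fun p => ?_
      simp only [Function.uncurry, norm_mul, eker_norm, RCLike.norm_conj, one_mul]
      exact charFun_norm_le Q p.2

end Aux

/-- If the bounded measurable kernel `k` on a real separable Hilbert space `X` is the Fourier
transform of a finite Borel measure `μ`, then for Borel probability measures `P, Q`,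
`MMD²_k(P,Q) = ∫ |P̂(h) − Q̂(h)|² dμ(h)`. -/
theorem mmdSq_eq_integral_sq_abs_charFun_sub
    {X : Type*} [NormedAddCommGroup X] [InnerProductSpace ℝ X] [CompleteSpace X]
    [TopologicalSpace.SeparableSpace X] [MeasurableSpace X] [BorelSpace X]
    (k : X → X → ℝ) (hbdd : ∃ M : ℝ, ∀ x y, |k x y| ≤ M)
    (hmeas : Measurable fun p : X × X => k p.1 p.2)
    (mu : Measure X) [IsFiniteMeasure mu]
    (hk : ∀ x y : X, (k x y : ℂ) = ∫ h, Complex.exp (Complex.I * ((⟪h, x - y⟫ : ℝ) : ℂ)) ∂mu)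
    (P Q : Measure X) [IsProbabilityMeasure P] [IsProbabilityMeasure Q] :
    mmdSq k P Q = ∫ h, ‖_root_.charFun P h - _root_.charFun Q h‖ ^ 2 ∂mu := by
  classical
  have conv : ∀ (ν₁ ν₂ : Measure X), (((∫ x, ∫ y, k x y ∂ν₂ ∂ν₁ : ℝ)) : ℂ)
      = ∫ x, ∫ y, (k x y : ℂ) ∂ν₂ ∂ν₁ := by
    intro ν₁ ν₂
    calc (((∫ x, ∫ y, k x y ∂ν₂ ∂ν₁ : ℝ)) : ℂ)
        = ∫ x, ((∫ y, k x y ∂ν₂ : ℝ) : ℂ) ∂ν₁ := (integral_ofReal).symm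
      _ = ∫ x, ∫ y, (k x y : ℂ) ∂ν₂ ∂ν₁ := by
          congr 1; ext x; exact (integral_ofReal).symm
  have hPP := double_integral_eq k mu hk P P
  have hQQ := double_integral_eq k mu hk Q Q
  have hQP := double_integral_eq k mu hk Q P
  set IPP := ∫ h, _root_.charFun P h * (starRingEnd ℂ) (_root_.charFun P h) ∂mu with hIPP
  set IQQ := ∫ h, _root_.charFun Q h * (starRingEnd ℂ) (_root_.charFun Q h) ∂mu with hIQQ
  set IQP := ∫ h, _root_.charFun Q h * (starRingEnd ℂ) (_root_.charFun P h) ∂mu with hIQP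
  set IPQ := ∫ h, _root_.charFun P h * (starRingEnd ℂ) (_root_.charFun Q h) ∂mu with hIPQ
  have hA : (∫ x, ∫ y, k x y ∂P ∂P) = IPP.re := by
    rw [← hPP, ← conv, Complex.ofReal_re]
  have hB : (∫ x, ∫ y, k x y ∂Q ∂Q) = IQQ.re := by
    rw [← hQQ, ← conv, Complex.ofReal_re]
  have hC : (∫ x, ∫ y, k x y ∂P ∂Q) = IQP.re := by
    rw [← hQP, ← conv, Complex.ofReal_re]
  -- integrability of the products of charFuns over mu
  have hint : ∀ (P' Q' : Measure X) [IsProbabilityMeasure P'] [IsProbabilityMeasure Q'],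
      Integrable (fun h => _root_.charFun P' h * (starRingEnd ℂ) (_root_.charFun Q' h)) mu := by
    intro P' Q' _ _
    refine (integrable_const (1 : ℝ)).mono' ?_ ?_
    · exact ((charFun_sm P').mul
        (Complex.continuous_conj.comp_stronglyMeasurable (charFun_sm Q'))).aestronglyMeasurable
    · refine Filter.Eventually.of_forall fun h => ?_
      rw [norm_mul, RCLike.norm_conj]
      exact mul_le_one₀ (charFun_norm_le P' h) (norm_nonneg _) (charFun_norm_le Q' h)
  have hintPP := hint P P
  have hintQQ := hint Q Q
  have hintQP := hint Q P
  have hintPQ := hint P Q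
  -- pointwise expansion
  have hexp : ∀ h : X, (_root_.charFun P h - _root_.charFun Q h)
        * (starRingEnd ℂ) (_root_.charFun P h - _root_.charFun Q h)
      = _root_.charFun P h * (starRingEnd ℂ) (_root_.charFun P h)
        + _root_.charFun Q h * (starRingEnd ℂ) (_root_.charFun Q h)
        - _root_.charFun P h * (starRingEnd ℂ) (_root_.charFun Q h)
        - _root_.charFun Q h * (starRingEnd ℂ) (_root_.charFun P h) := by
    intro h; rw [map_sub]; ring
  have habs : ∀ h : X, (‖_root_.charFun P h - _root_.charFun Q h‖ ^ 2 : ℝ)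
      = ((_root_.charFun P h - _root_.charFun Q h) * (starRingEnd ℂ) (_root_.charFun P h - _root_.charFun Q h)).re := by
    intro h; rw [Complex.sq_norm, Complex.mul_conj, Complex.ofReal_re]
  have hIntDiff : Integrable (fun h => (_root_.charFun P h - _root_.charFun Q h)
      * (starRingEnd ℂ) (_root_.charFun P h - _root_.charFun Q h)) mu := by
    have : (fun h => (_root_.charFun P h - _root_.charFun Q h)
        * (starRingEnd ℂ) (_root_.charFun P h - _root_.charFun Q h))
        = fun h => _root_.charFun P h * (starRingEnd ℂ) (_root_.charFun P h)
        + _root_.charFun Q h * (starRingEnd ℂ) (_root_.charFun Q h)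
        - _root_.charFun P h * (starRingEnd ℂ) (_root_.charFun Q h)
        - _root_.charFun Q h * (starRingEnd ℂ) (_root_.charFun P h) := funext hexp
    rw [this]
    exact ((hintPP.add hintQQ).sub hintPQ).sub hintQP
  have hsplit : ∫ h, (_root_.charFun P h - _root_.charFun Q h)
      * (starRingEnd ℂ) (_root_.charFun P h - _root_.charFun Q h) ∂mu = IPP + IQQ - IPQ - IQP := by
    have h1 : Integrable (fun h => _root_.charFun P h * (starRingEnd ℂ) (_root_.charFun P h)
        + _root_.charFun Q h * (starRingEnd ℂ) (_root_.charFun Q h)) mu := hintPP.add hintQQ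
    have h2 : Integrable (fun h => _root_.charFun P h * (starRingEnd ℂ) (_root_.charFun P h)
        + _root_.charFun Q h * (starRingEnd ℂ) (_root_.charFun Q h)
        - _root_.charFun P h * (starRingEnd ℂ) (_root_.charFun Q h)) mu := h1.sub hintPQ
    simp_rw [hexp]
    rw [integral_sub h2 hintQP, integral_sub h1 hintPQ, integral_add hintPP hintQQ]
  have hconj : IPQ = (starRingEnd ℂ) IQP := by
    rw [hIPQ, hIQP, ← integral_conj]
    congr 1; ext h
    rw [map_mul, Complex.conj_conj, mul_comm]
  have hre : IPQ.re = IQP.re := by rw [hconj, Complex.conj_re]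
  have hrhs : ∫ h, ‖_root_.charFun P h - _root_.charFun Q h‖ ^ 2 ∂mu
      = (IPP + IQQ - IPQ - IQP).re := by
    simp_rw [habs, ← RCLike.re_to_complex]
    rw [integral_re hIntDiff, hsplit, RCLike.re_to_complex]
  rw [hrhs, mmdSq, hA, hB, hC]
  simp only [Complex.sub_re, Complex.add_re]
  linarith
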